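/- Let X₁, ..., X_n be i.i.d. real random variables with E[|X₁|⁸] < ∞, let Z̄_n = (1/n)Σ X_i, and let X₁* denote a draw uniformly at random from {X₁,...,X_n} (a bootstrap sample). Then P[ E[|X₁* − Z̄_n|⁴ | X₁,...,X_n] ≥ 2⁴(E[|X₁|⁴] + |E[X₁]|⁴) + 2⁵ ] = O(n^{-1}). That is, with probability at least 1 − O(n^{-1}) over the original sample, the conditional fourth central moment of a bootstrap draw is bounded by an explicit constant depending only on the population moments. -/

import Mathlib

open MeasureTheory ProbabilityTheory

lemma integral_comp_eq_of_map_eq {Ω : Type} [MeasurableSpace Ω] {μ : Measure Ω}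
    {X Y : Ω → ℝ} (hX : Measurable X) (hY : Measurable Y)
    (h : Measure.map X μ = Measure.map Y μ) (φ : ℝ → ℝ) (hφ : Measurable φ) :
    ∫ ω, φ (X ω) ∂μ = ∫ ω, φ (Y ω) ∂μ := by
  rw [← integral_map hX.aemeasurable hφ.aestronglyMeasurable, h,
    integral_map hY.aemeasurable hφ.aestronglyMeasurable]

lemma memℒp_of_map_eq {Ω : Type} [MeasurableSpace Ω] {μ : Measure Ω}
    {X Y : Ω → ℝ} (hX : Measurable X) (hY : Measurable Y)
    (h : Measure.map X μ = Measure.map Y μ) (h2 : MemLp Y 2 μ) : MemLp X 2 μ := by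
  have := (memLp_map_measure_iff aestronglyMeasurable_id hY.aemeasurable).mpr h2
  rw [← h] at this
  exact (memLp_map_measure_iff aestronglyMeasurable_id hX.aemeasurable).mp this

/-- Chebyshev's inequality for averages of iid square-integrable random variables. -/
lemma cheb_iid {Ω : Type} [MeasurableSpace Ω] {μ : Measure Ω} [IsProbabilityMeasure μ]
    (X : ℕ → Ω → ℝ) (hmeas : ∀ i, Measurable (X i))
    (hindep : iIndepFun X μ)
    (hident : ∀ i, Measure.map (X i) μ = Measure.map (X 0) μ)
    (h2 : MemLp (X 0) 2 μ) (n : ℕ) (hn : 1 ≤ n) (δ : ℝ) (hδ : 0 < δ) :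
    μ {ω | δ ≤ |(n : ℝ)⁻¹ * ∑ i ∈ Finset.range n, X i ω - ∫ ω', X 0 ω' ∂μ|}
      ≤ ENNReal.ofReal ((∫ ω', X 0 ω' ^ 2 ∂μ) / (n * δ ^ 2)) := by
  have hnR : (0:ℝ) < n := by exact_mod_cast hn
  have h2i : ∀ i, MemLp (X i) 2 μ := fun i => memℒp_of_map_eq (hmeas i) (hmeas 0) (hident i) h2
  have hint : ∀ i, ∫ ω, X i ω ∂μ = ∫ ω, X 0 ω ∂μ := fun i =>
    integral_comp_eq_of_map_eq (hmeas i) (hmeas 0) (hident i) id measurable_id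
  have hsq : ∀ i, ∫ ω, X i ω ^ 2 ∂μ = ∫ ω, X 0 ω ^ 2 ∂μ := fun i =>
    integral_comp_eq_of_map_eq (hmeas i) (hmeas 0) (hident i) (fun x => x ^ 2)
      (measurable_id.pow_const 2)
  have hvar : ∀ i, variance (X i) μ = variance (X 0) μ := fun i => by
    rw [variance_eq_sub (h2i i), variance_eq_sub h2]
    simp only [Pi.pow_apply]
    rw [hsq i, hint i]
  set m := ∫ ω', X 0 ω' ∂μ with hm
  have hSmem : MemLp (∑ i ∈ Finset.range n, X i) 2 μ :=
    memLp_finset_sum' _ (fun i _ => h2i i)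
  have hSint : μ[∑ i ∈ Finset.range n, X i] = n * m := by
    simp only [Finset.sum_apply]
    rw [integral_finset_sum _ (fun i _ => (h2i i).integrable one_le_two)]
    simp_rw [hint]
    simp [mul_comm]
  have hSvar : variance (∑ i ∈ Finset.range n, X i) μ = n * variance (X 0) μ := by
    rw [IndepFun.variance_sum (fun i _ => h2i i)
      (fun i _ j _ hij => hindep.indepFun hij)]
    simp [hvar, mul_comm]
  have key := meas_ge_le_variance_div_sq (μ := μ) hSmem (c := n * δ) (by positivity)
  rw [hSint, hSvar] at key
  have hsub : {ω | δ ≤ |(n : ℝ)⁻¹ * ∑ i ∈ Finset.range n, X i ω - m|}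
      ⊆ {ω | (n:ℝ) * δ ≤ |(∑ i ∈ Finset.range n, X i) ω - n * m|} := by
    intro ω hω
    simp only [Set.mem_setOf_eq] at hω ⊢
    have : (∑ i ∈ Finset.range n, X i) ω - n * m
        = n * ((n : ℝ)⁻¹ * ∑ i ∈ Finset.range n, X i ω - m) := by
      simp only [Finset.sum_apply]
      rw [mul_sub, ← mul_assoc, mul_inv_cancel₀ hnR.ne', one_mul]
    rw [this, abs_mul, abs_of_pos hnR]
    exact mul_le_mul_of_nonneg_left hω hnR.le
  refine le_trans (measure_mono hsub) (le_trans key ?_)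
  apply ENNReal.ofReal_le_ofReal
  have hv := variance_le_expectation_sq (μ := μ) (hmeas 0).aestronglyMeasurable
  simp only [Pi.pow_apply] at hv
  rw [div_le_div_iff₀ (by positivity) (by positivity)]
  calc (n:ℝ) * variance (X 0) μ * (n * δ ^ 2)
      ≤ (n:ℝ) * (∫ ω', X 0 ω' ^ 2 ∂μ) * (n * δ ^ 2) := by
        have := mul_le_mul_of_nonneg_right (mul_le_mul_of_nonneg_left hv hnR.le)
          (by positivity : (0:ℝ) ≤ (n:ℝ) * δ ^ 2)
        linarith
    _ = (∫ ω', X 0 ω' ^ 2 ∂μ) * ((n:ℝ) * δ) ^ 2 := by ring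

/-- The purely algebraic contradiction at the heart of the argument. -/
lemma stmt10_alg (n : ℕ) (hn : 1 ≤ n) (x : ℕ → ℝ) (m4 a δ : ℝ) (hm4 : 0 ≤ m4) (ha : 0 ≤ a)
    (hδ0 : 0 < δ) (hδ1 : δ ≤ 1) (hδ2 : 15 * δ * (a + 1) ^ 3 ≤ a ^ 4 + 2)
    (hE : 2 ^ 4 * (m4 + a ^ 4) + 2 ^ 5
      ≤ (n : ℝ)⁻¹ * ∑ i ∈ Finset.range n, |x i - (n : ℝ)⁻¹ * ∑ j ∈ Finset.range n, x j| ^ 4)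
    (hA : (n : ℝ)⁻¹ * ∑ i ∈ Finset.range n, |x i| ^ 4 < m4 + 1)
    (hz : |(n : ℝ)⁻¹ * ∑ j ∈ Finset.range n, x j| ≤ a + δ) : False := by
  have hnR : (0:ℝ) < n := by exact_mod_cast hn
  set z := (n : ℝ)⁻¹ * ∑ j ∈ Finset.range n, x j with hzdef
  have hz4 : |z| ^ 4 ≤ 2 * a ^ 4 + 2 := by
    calc |z| ^ 4 ≤ (a + δ) ^ 4 := pow_le_pow_left₀ (abs_nonneg _) hz 4
      _ ≤ 2 * a ^ 4 + 2 := by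
        nlinarith [mul_nonneg hδ0.le (sub_nonneg.2 hδ1), mul_nonneg ha hδ0.le,
          mul_nonneg (mul_nonneg ha ha) (mul_nonneg hδ0.le (sub_nonneg.2 hδ1)),
          mul_nonneg ha (mul_nonneg hδ0.le (sub_nonneg.2 hδ1)),
          mul_nonneg (mul_nonneg hδ0.le hδ0.le) (sub_nonneg.2 hδ1),
          mul_nonneg (mul_nonneg ha ha) ha, sq_nonneg δ]
  have hsum : ∑ i ∈ Finset.range n, |x i - z| ^ 4
      ≤ 8 * ∑ i ∈ Finset.range n, |x i| ^ 4 + n * (8 * |z| ^ 4) := by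
    calc ∑ i ∈ Finset.range n, |x i - z| ^ 4
        ≤ ∑ i ∈ Finset.range n, (8 * |x i| ^ 4 + 8 * |z| ^ 4) := by
          refine Finset.sum_le_sum fun i _ => ?_
          have h1 : |x i - z| ≤ |x i| + |z| := abs_sub _ _
          have h2 : |x i - z| ^ 4 ≤ (|x i| + |z|) ^ 4 :=
            pow_le_pow_left₀ (abs_nonneg _) h1 4
          nlinarith [sq_nonneg (|x i| - |z|), sq_nonneg (|x i| + |z|),
            sq_nonneg (|x i| ^ 2 - |z| ^ 2), abs_nonneg (x i), abs_nonneg z,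
            mul_nonneg (abs_nonneg (x i)) (abs_nonneg z)]
      _ = 8 * ∑ i ∈ Finset.range n, |x i| ^ 4 + n * (8 * |z| ^ 4) := by
          rw [Finset.sum_add_distrib, Finset.sum_const, Finset.card_range, ← Finset.mul_sum]
          simp [nsmul_eq_mul]
  have hmul : (n : ℝ)⁻¹ * ∑ i ∈ Finset.range n, |x i - z| ^ 4
      ≤ 8 * ((n : ℝ)⁻¹ * ∑ i ∈ Finset.range n, |x i| ^ 4) + 8 * |z| ^ 4 := by
    have := mul_le_mul_of_nonneg_left hsum (inv_nonneg.2 hnR.le)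
    calc (n : ℝ)⁻¹ * ∑ i ∈ Finset.range n, |x i - z| ^ 4
        ≤ (n : ℝ)⁻¹ * (8 * ∑ i ∈ Finset.range n, |x i| ^ 4 + n * (8 * |z| ^ 4)) := this
      _ = 8 * ((n : ℝ)⁻¹ * ∑ i ∈ Finset.range n, |x i| ^ 4)
          + ((n : ℝ)⁻¹ * n) * (8 * |z| ^ 4) := by ring
      _ = 8 * ((n : ℝ)⁻¹ * ∑ i ∈ Finset.range n, |x i| ^ 4) + 8 * |z| ^ 4 := by
          rw [inv_mul_cancel₀ hnR.ne']; ring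
  nlinarith [hE, hmul, hA, hz4, hm4]

/-- For i.i.d. real random variables with finite eighth moment, with
probability at least `1 - O(n⁻¹)` the conditional fourth central moment of a bootstrap
draw, `(1/n) Σ_{i<n} |X_i - Z̄_n|⁴`, is bounded by `2⁴(E|X₁|⁴ + |E X₁|⁴) + 2⁵`. -/
theorem stmt10
    (Ω : Type) [MeasurableSpace Ω] (μ : Measure Ω) [IsProbabilityMeasure μ]
    (X : ℕ → Ω → ℝ)
    (hmeas : ∀ i, Measurable (X i))
    (hindep : iIndepFun X μ)
    (hident : ∀ i, Measure.map (X i) μ = Measure.map (X 0) μ)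
    (hmom8 : Integrable (fun ω => |X 0 ω| ^ 8) μ) :
    ∃ C : ℝ, 0 < C ∧ ∀ n : ℕ, 1 ≤ n →
      (μ {ω | 2 ^ 4 * ((∫ ω', |X 0 ω'| ^ 4 ∂μ) + |∫ ω', X 0 ω' ∂μ| ^ 4) + 2 ^ 5
          ≤ (n : ℝ)⁻¹ * ∑ i ∈ Finset.range n,
              |X i ω - (n : ℝ)⁻¹ * ∑ j ∈ Finset.range n, X j ω| ^ 4}).toReal
        ≤ C / n := by
  classical
  -- abbreviations
  set m4 : ℝ := ∫ ω', |X 0 ω'| ^ 4 ∂μ with hm4def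
  set m1 : ℝ := ∫ ω', X 0 ω' ∂μ with hm1def
  set a : ℝ := |m1| with hadef
  have ha : 0 ≤ a := abs_nonneg _
  set δ : ℝ := min 1 ((a ^ 4 + 2) / (15 * (a + 1) ^ 3)) with hδdef
  have hδ0 : 0 < δ := lt_min one_pos (by positivity)
  have hδ1 : δ ≤ 1 := min_le_left _ _
  have hδ2 : 15 * δ * (a + 1) ^ 3 ≤ a ^ 4 + 2 := by
    have h := min_le_right 1 ((a ^ 4 + 2) / (15 * (a + 1) ^ 3))
    rw [le_div_iff₀ (by positivity)] at h
    calc 15 * δ * (a + 1) ^ 3 = δ * (15 * (a + 1) ^ 3) := by ring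
      _ ≤ a ^ 4 + 2 := h
  -- the "fourth power" process Y i = |X i|⁴
  set g : ℝ → ℝ := fun x => |x| ^ 4 with hgdef
  have hg : Measurable g := measurable_id.abs.pow_const 4
  set Y : ℕ → Ω → ℝ := fun i ω => |X i ω| ^ 4 with hYdef
  have hYmeas : ∀ i, Measurable (Y i) := fun i => (hmeas i).abs.pow_const 4
  have hYindep : iIndepFun Y μ := hindep.comp (fun _ => g) (fun _ => hg)
  have hYident : ∀ i, Measure.map (Y i) μ = Measure.map (Y 0) μ := fun i => by
    have h1 : Measure.map (Y i) μ = Measure.map g (Measure.map (X i) μ) :=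
      (Measure.map_map hg (hmeas i)).symm
    have h2 : Measure.map (Y 0) μ = Measure.map g (Measure.map (X 0) μ) :=
      (Measure.map_map hg (hmeas 0)).symm
    rw [h1, h2, hident i]
  -- integrability facts
  have hmomY : Integrable (fun ω => (Y 0 ω) ^ 2) μ := by
    have : (fun ω => (Y 0 ω) ^ 2) = fun ω => |X 0 ω| ^ 8 := by
      funext ω; simp only [hYdef]; ring
    rw [this]; exact hmom8
  have hY2 : MemLp (Y 0) 2 μ :=
    (memLp_two_iff_integrable_sq (hYmeas 0).aestronglyMeasurable).mpr hmomY
  have hXsq : Integrable (fun ω => X 0 ω ^ 2) μ := by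
    refine Integrable.mono' ((integrable_const 1).add hmom8)
      ((hmeas 0).pow_const 2).aestronglyMeasurable (ae_of_all _ fun ω => ?_)
    have h1 : ‖X 0 ω ^ 2‖ = |X 0 ω| ^ 2 := by
      rw [Real.norm_eq_abs, abs_pow, sq_abs, ← sq_abs]
    rw [h1]
    have ht : (0:ℝ) ≤ |X 0 ω| := abs_nonneg _
    simp only [Pi.add_apply]
    nlinarith [sq_nonneg (|X 0 ω| ^ 4 - 1), sq_nonneg (|X 0 ω| ^ 2 - 1),
      sq_nonneg (|X 0 ω| ^ 4 - |X 0 ω|), sq_nonneg (|X 0 ω|)]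
  have hX2 : MemLp (X 0) 2 μ :=
    (memLp_two_iff_integrable_sq (hmeas 0).aestronglyMeasurable).mpr hXsq
  -- m4 is nonnegative
  have hm4 : 0 ≤ m4 := integral_nonneg fun ω => by positivity
  -- the constant
  set s2 : ℝ := ∫ ω', X 0 ω' ^ 2 ∂μ with hs2def
  set s8 : ℝ := ∫ ω', Y 0 ω' ^ 2 ∂μ with hs8def
  have hs2 : 0 ≤ s2 := integral_nonneg fun ω => sq_nonneg _
  have hs8 : 0 ≤ s8 := integral_nonneg fun ω => sq_nonneg _
  refine ⟨s8 + s2 / δ ^ 2 + 1, by positivity, fun n hn => ?_⟩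
  have hnR : (0:ℝ) < n := by exact_mod_cast hn
  -- event inclusion
  have hsub : {ω | 2 ^ 4 * (m4 + a ^ 4) + 2 ^ 5
        ≤ (n : ℝ)⁻¹ * ∑ i ∈ Finset.range n,
            |X i ω - (n : ℝ)⁻¹ * ∑ j ∈ Finset.range n, X j ω| ^ 4}
      ⊆ {ω | (1:ℝ) ≤ |(n : ℝ)⁻¹ * ∑ i ∈ Finset.range n, Y i ω - ∫ ω', Y 0 ω' ∂μ|}
        ∪ {ω | δ ≤ |(n : ℝ)⁻¹ * ∑ i ∈ Finset.range n, X i ω - ∫ ω', X 0 ω' ∂μ|} := by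
    intro ω hω
    simp only [Set.mem_setOf_eq] at hω
    by_contra hc
    simp only [Set.mem_union, Set.mem_setOf_eq, not_or, not_le] at hc
    obtain ⟨h1, h2⟩ := hc
    have hIY : ∫ ω', Y 0 ω' ∂μ = m4 := rfl
    rw [hIY] at h1
    have hA : (n : ℝ)⁻¹ * ∑ i ∈ Finset.range n, |X i ω| ^ 4 < m4 + 1 := by
      have h1' := (abs_lt.mp h1).2
      have he : (n:ℝ)⁻¹ * ∑ i ∈ Finset.range n, Y i ω
          = (n:ℝ)⁻¹ * ∑ i ∈ Finset.range n, |X i ω| ^ 4 := by simp [hYdef]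
      rw [he] at h1'
      linarith
    have hz : |(n : ℝ)⁻¹ * ∑ j ∈ Finset.range n, X j ω| ≤ a + δ := by
      have h4 := h2.le
      rw [← hm1def] at h4
      have h3 : |(n : ℝ)⁻¹ * ∑ j ∈ Finset.range n, X j ω| - |m1|
          ≤ |(n : ℝ)⁻¹ * ∑ j ∈ Finset.range n, X j ω - m1| := abs_sub_abs_le_abs_sub _ _
      rw [hadef]
      linarith
    exact stmt10_alg n hn (fun i => X i ω) m4 a δ hm4 ha hδ0 hδ1 hδ2 hω hA hz
  -- Chebyshev bounds
  have hb1 := cheb_iid Y hYmeas hYindep hYident hY2 n hn 1 one_pos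
  have hb2 := cheb_iid X hmeas hindep hident hX2 n hn δ hδ0
  have hμ : μ {ω | 2 ^ 4 * (m4 + a ^ 4) + 2 ^ 5
        ≤ (n : ℝ)⁻¹ * ∑ i ∈ Finset.range n,
            |X i ω - (n : ℝ)⁻¹ * ∑ j ∈ Finset.range n, X j ω| ^ 4}
      ≤ ENNReal.ofReal ((s8 + s2 / δ ^ 2) / n) := by
    refine le_trans (measure_mono hsub) (le_trans (measure_union_le _ _) ?_)
    refine le_trans (add_le_add hb1 hb2) ?_
    rw [← ENNReal.ofReal_add (by positivity) (by positivity)]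
    apply ENNReal.ofReal_le_ofReal
    have heq : (∫ ω', Y 0 ω' ^ 2 ∂μ) / (↑n * 1 ^ 2) + (∫ ω', X 0 ω' ^ 2 ∂μ) / (↑n * δ ^ 2)
        = (s8 + s2 / δ ^ 2) / ↑n := by
      rw [hs8def, hs2def]
      field_simp
    exact le_of_eq heq
  have hfin := ENNReal.toReal_le_of_le_ofReal (by positivity) hμ
  refine le_trans hfin ?_
  gcongr ?_ / _
  linarith
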